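/- If G is a K_{1,r}-free graph with r ≥ 3, then i(G) ≤ (r − 2)(γ(G) − 1) + 1. -/

import Mathlib

open SimpleGraph

variable {V : Type*}

/-- The closed neighborhood `N[S]` of a set of vertices. -/
def closedNbhd (G : SimpleGraph V) (S : Set V) : Set V :=
  {v | v ∈ S ∨ ∃ u ∈ S, G.Adj u v}

/-- The open neighborhood `N(S)` of a set of vertices. -/
def openNbhd (G : SimpleGraph V) (S : Set V) : Set V :=
  {v | ∃ u ∈ S, G.Adj u v}

/-- A set is independent if no two of its vertices are adjacent. -/
def IsIndep (G : SimpleGraph V) (S : Set V) : Prop :=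
  S.Pairwise fun u w => ¬ G.Adj u w

/-- `S` is `K_k`-isolating: `G - N[S]` contains no clique of size `k`. -/
def IsIsolating (G : SimpleGraph V) (k : ℕ) (S : Set V) : Prop :=
  ∀ T : Finset V, (↑T : Set V) ∩ closedNbhd G S = ∅ → G.IsClique ↑T → T.card ≠ k

/-- The `K_k`-isolation number `ι_k(G)`. -/
noncomputable def iota [Fintype V] (G : SimpleGraph V) (k : ℕ) : ℕ :=
  sInf {n | ∃ S : Finset V, S.card = n ∧ IsIsolating G k ↑S}

/-- The independent `K_k`-isolation number `ι'_k(G)`. -/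
noncomputable def iota' [Fintype V] (G : SimpleGraph V) (k : ℕ) : ℕ :=
  sInf {n | ∃ S : Finset V, S.card = n ∧ IsIsolating G k ↑S ∧ IsIndep G ↑S}

/-- A dominating set: every vertex lies in `N[S]`. -/
def IsDominating (G : SimpleGraph V) (S : Set V) : Prop :=
  ∀ v, v ∈ closedNbhd G S

/-- The domination number `γ(G)`. -/
noncomputable def gammaNum [Fintype V] (G : SimpleGraph V) : ℕ :=
  sInf {n | ∃ S : Finset V, S.card = n ∧ IsDominating G ↑S}

/-- The independent domination number `i(G)`. -/
noncomputable def iNum [Fintype V] (G : SimpleGraph V) : ℕ :=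
  sInf {n | ∃ S : Finset V, S.card = n ∧ IsDominating G ↑S ∧ IsIndep G ↑S}

/-- `G` is `K_{1,r}`-free: no induced subgraph isomorphic to the star `K_{1,r}`. -/
def K1rFree (G : SimpleGraph V) (r : ℕ) : Prop :=
  IsEmpty (completeBipartiteGraph (Fin 1) (Fin r) ↪g G)

/-- Degree of `v` inside the vertex subset `T`. -/
def degIn [DecidableEq V] (G : SimpleGraph V) [DecidableRel G.Adj] (T : Finset V) (v : V) : ℕ :=
  (T.filter (G.Adj v)).card

section AuxProof

variable {V : Type*}

lemma closedNbhd_mono' {G : SimpleGraph V} {S T : Set V} (h : S ⊆ T) :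
    closedNbhd G S ⊆ closedNbhd G T := by
  rintro v (hv | ⟨u, hu, hadj⟩)
  · exact Or.inl (h hv)
  · exact Or.inr ⟨u, h hu, hadj⟩

lemma no_big_indep_nbhd {G : SimpleGraph V} {r : ℕ} (hfree : K1rFree G r)
    (x : V) (L : Finset V) (hcard : L.card = r)
    (hadj : ∀ m ∈ L, G.Adj x m)
    (hind : ∀ m ∈ L, ∀ m' ∈ L, m ≠ m' → ¬ G.Adj m m') : False := by
  classical
  let e : Fin r ≃ {y // y ∈ L} := (finCongr hcard.symm).trans L.equivFin.symm
  have hxe : ∀ i : Fin r, x ≠ (e i : V) := fun i => (hadj _ (e i).2).ne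
  refine hfree.false ⟨⟨Sum.elim (fun _ => x) (fun i => (e i : V)), ?_⟩, ?_⟩
  · rintro (i | i) (j | j) h
    · exact congrArg Sum.inl (Subsingleton.elim i j)
    · exact absurd (by simpa using h) (hxe j)
    · exact absurd (by simpa using h.symm) (hxe i)
    · exact congrArg Sum.inr (e.injective (Subtype.ext (by simpa using h)))
  · intro a b
    change G.Adj (Sum.elim (fun _ => x) (fun i => (e i : V)) a) (Sum.elim (fun _ => x) (fun i => (e i : V)) b) ↔ _
    rcases a with i | i <;> rcases b with j | j
    · simp
    · simpa using hadj _ (e j).2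
    · simpa using (hadj _ (e i).2).symm
    · refine iff_of_false ?_ (by simp)
      simp only [Function.Embedding.coeFn_mk, Sum.elim_inr]
      intro h
      by_cases hij : i = j
      · subst hij; exact G.irrefl h
      · exact hind _ (e i).2 _ (e j).2 (fun hh => hij (e.injective (Subtype.ext hh))) h

lemma exists_maxIndep (G : SimpleGraph V) (A : Finset V) :
    ∃ M, M ⊆ A ∧ IsIndep G ↑M ∧ ∀ v ∈ A, v ∉ M → ∃ m ∈ M, G.Adj m v := by
  classical
  have hne : (A.powerset.filter fun S : Finset V => IsIndep G ↑S).Nonempty :=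
    ⟨∅, Finset.mem_filter.2 ⟨Finset.empty_mem_powerset A, by simp [IsIndep]⟩⟩
  obtain ⟨M, hM, hmax⟩ := Finset.exists_max_image _ Finset.card hne
  simp only [Finset.mem_filter, Finset.mem_powerset] at hM
  refine ⟨M, hM.1, hM.2, ?_⟩
  intro v hvA hvM
  by_contra hcon
  push_neg at hcon
  have hins : insert v M ∈ A.powerset.filter fun S : Finset V => IsIndep G ↑S := by
    simp only [Finset.mem_filter, Finset.mem_powerset]
    refine ⟨Finset.insert_subset hvA hM.1, ?_⟩
    rw [Finset.coe_insert]
    refine Set.pairwise_insert.mpr ⟨hM.2, ?_⟩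
    intro m hm _
    exact ⟨fun hadj => hcon m hm hadj.symm, hcon m hm⟩
  have := hmax _ hins
  rw [Finset.card_insert_of_notMem hvM] at this
  omega

lemma step_lemma [Fintype V] [DecidableEq V] (G : SimpleGraph V) {r : ℕ} (hr : 3 ≤ r)
    (hfree : K1rFree G r) (I : Finset V) (x : V) :
    ∃ M : Finset V, IsIndep G ↑M ∧
      (∀ m ∈ M, m ∉ closedNbhd G (↑I : Set V)) ∧
      M.card ≤ r - 2 ∧
      (x ∉ closedNbhd G (↑I : Set V) → M.card ≤ 1) ∧
      (∀ v ∈ closedNbhd G ({x} : Set V), v ∈ closedNbhd G (↑(I ∪ M) : Set V)) := by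
  classical
  by_cases hx : x ∈ closedNbhd G (↑I : Set V)
  case neg =>
    refine ⟨{x}, by simp [IsIndep], ?_, ?_, fun _ => by simp, ?_⟩
    · intro m hm
      rw [Finset.mem_singleton] at hm; subst hm; exact hx
    · rw [Finset.card_singleton]; omega
    · intro v hv
      rcases hv with hv | ⟨u, hu, hadj⟩
      · exact Or.inl (by simp [show v = x from hv])
      · exact Or.inr ⟨x, by simp, (show u = x from hu) ▸ hadj⟩
  case pos =>
    set A : Finset V := Finset.univ.filter
      (fun v => v ∈ closedNbhd G ({x} : Set V) ∧ v ∉ closedNbhd G (↑I : Set V)) with hA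
    obtain ⟨M, hMA, hMind, hMmax⟩ := exists_maxIndep G A
    have hAmem : ∀ v, v ∈ A ↔
        (v ∈ closedNbhd G ({x} : Set V) ∧ v ∉ closedNbhd G (↑I : Set V)) := by
      intro v; simp [hA]
    have hMnI : ∀ m ∈ M, m ∉ closedNbhd G (↑I : Set V) :=
      fun m hm => ((hAmem m).1 (hMA hm)).2
    have hcard : M.card ≤ r - 2 := by
      by_contra hc
      push_neg at hc
      rcases hx with hxI | ⟨u, huI, hux⟩
      · have hMe : M = ∅ := by
          rw [Finset.eq_empty_iff_forall_notMem]
          intro m hm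
          have h1 := (hAmem m).1 (hMA hm)
          rcases h1.1 with h | ⟨w, hw, hadj⟩
          · exact h1.2 (by rw [show m = x from h]; exact Or.inl hxI)
          · exact h1.2 (Or.inr ⟨x, hxI, by rwa [show w = x from hw] at hadj⟩)
        rw [hMe, Finset.card_empty] at hc
        omega
      · have hMadj : ∀ m ∈ M, G.Adj x m := by
          intro m hm
          have h1 := (hAmem m).1 (hMA hm)
          rcases h1.1 with h | ⟨w, hw, hadj⟩
          · exact absurd (by rw [show m = x from h]; exact Or.inr ⟨u, huI, hux⟩) h1.2
          · rwa [show w = x from hw] at hadj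
        obtain ⟨M', hM'M, hM'card⟩ :=
          Finset.exists_subset_card_eq (show r - 1 ≤ M.card by omega)
        have huM' : u ∉ M' := fun h => hMnI u (hM'M h) (Or.inl huI)
        have hLcard : (insert u M').card = r := by
          rw [Finset.card_insert_of_notMem huM', hM'card]; omega
        refine no_big_indep_nbhd hfree x (insert u M') hLcard ?_ ?_
        · intro m hm
          rcases Finset.mem_insert.1 hm with hmu | hmM
          · rw [hmu]; exact hux.symm
          · exact hMadj m (hM'M hmM)
        · intro m hm m' hm' hmne hadj
          rcases Finset.mem_insert.1 hm with hmu | hmM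
          · rcases Finset.mem_insert.1 hm' with hmu' | hmM'
            · exact hmne (hmu.trans hmu'.symm)
            · refine hMnI m' (hM'M hmM') (Or.inr ⟨u, huI, ?_⟩)
              rwa [hmu] at hadj
          · rcases Finset.mem_insert.1 hm' with hmu' | hmM'
            · refine hMnI m (hM'M hmM) (Or.inr ⟨u, huI, ?_⟩)
              rw [hmu'] at hadj; exact hadj.symm
            · exact hMind (Finset.mem_coe.2 (hM'M hmM)) (Finset.mem_coe.2 (hM'M hmM')) hmne hadj
    refine ⟨M, hMind, hMnI, hcard, fun h => absurd hx h, ?_⟩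
    intro v hv
    by_cases hvI : v ∈ closedNbhd G (↑I : Set V)
    · refine closedNbhd_mono' ?_ hvI
      intro a ha
      rw [Finset.coe_union]
      exact Or.inl ha
    · have hvA : v ∈ A := (hAmem v).2 ⟨hv, hvI⟩
      by_cases hvM : v ∈ M
      · exact Or.inl (by simp [hvM])
      · obtain ⟨m, hm, hadj⟩ := hMmax v hvA hvM
        exact Or.inr ⟨m, by simp [hm], hadj⟩

lemma build_lemma [Fintype V] [DecidableEq V] (G : SimpleGraph V) {r : ℕ} (hr : 3 ≤ r)
    (hfree : K1rFree G r) (L : List V) :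
    ∃ I : Finset V, IsIndep G ↑I ∧
      (∀ x ∈ L, ∀ v ∈ closedNbhd G ({x} : Set V), v ∈ closedNbhd G (↑I : Set V)) ∧
      I.card ≤ (r - 2) * L.length - (r - 3) := by
  induction L with
  | nil => exact ⟨∅, by simp [IsIndep], by simp, by simp⟩
  | cons x xs ih =>
    obtain ⟨I, hIind, hIdom, hIcard⟩ := ih
    obtain ⟨M, hMind, hMnI, hMcard, hMcard1, hMdom⟩ := step_lemma G hr hfree I x
    refine ⟨I ∪ M, ?_, ?_, ?_⟩
    · rw [Finset.coe_union]
      intro a ha b hb hne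
      rcases ha with ha | ha <;> rcases hb with hb | hb
      · exact hIind ha hb hne
      · exact fun hadj => hMnI b hb (Or.inr ⟨a, ha, hadj⟩)
      · exact fun hadj => hMnI a ha (Or.inr ⟨b, hb, hadj.symm⟩)
      · exact hMind ha hb hne
    · intro y hy v hv
      rcases List.mem_cons.1 hy with rfl | hy
      · exact hMdom v hv
      · refine closedNbhd_mono' ?_ (hIdom y hy v hv)
        intro a ha
        rw [Finset.coe_union]
        exact Or.inl ha
    · have hcardU : (I ∪ M).card ≤ I.card + M.card := Finset.card_union_le I M
      have hmul : (r - 2) * (x :: xs).length = (r - 2) * xs.length + (r - 2) := by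
        rw [List.length_cons, Nat.mul_succ]
      rw [hmul]
      by_cases hx : x ∈ closedNbhd G (↑I : Set V)
      · have hI1 : 1 ≤ I.card := by
          rcases Finset.eq_empty_or_nonempty I with rfl | h
          · rcases hx with h | ⟨u, hu, _⟩
            · simp at h
            · simp at hu
          · exact Finset.card_pos.2 h
        set a := (r - 2) * xs.length with ha
        omega
      · have hM1 := hMcard1 hx
        set a := (r - 2) * xs.length with ha
        omega

end AuxProof

/-- For K_{1,r}-free graphs, i(G) ≤ (r − 2)(γ(G) − 1) + 1. -/
theorem stmt_6 [Fintype V] (G : SimpleGraph V) (r : ℕ) (hr : 3 ≤ r)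
    (hfree : K1rFree G r) :
    iNum G ≤ (r - 2) * (gammaNum G - 1) + 1 := by
  classical
  have hne : {n | ∃ S : Finset V, S.card = n ∧ IsDominating G ↑S}.Nonempty :=
    ⟨Finset.univ.card, Finset.univ, rfl, fun v => Or.inl (by simp)⟩
  obtain ⟨D, hDcard, hDdom⟩ :
      ∃ S : Finset V, S.card = gammaNum G ∧ IsDominating G ↑S := Nat.sInf_mem hne
  obtain ⟨I, hIind, hIdom, hIcard⟩ := build_lemma G hr hfree D.toList
  have hIdomG : IsDominating G (↑I : Set V) := by
    intro v
    rcases hDdom v with hvD | ⟨u, huD, hadj⟩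
    · exact hIdom v (by simpa using hvD) v (Or.inl rfl)
    · exact hIdom u (by simpa using huD) v (Or.inr ⟨u, rfl, hadj⟩)
  have h1 : iNum G ≤ I.card := Nat.sInf_le ⟨I, rfl, hIdomG, hIind⟩
  rw [Finset.length_toList] at hIcard
  have h2 : (r - 2) * D.card - (r - 3) ≤ (r - 2) * (D.card - 1) + 1 := by
    rcases Nat.eq_zero_or_pos D.card with h0 | hpos
    · simp [h0]
    · obtain ⟨d, hd⟩ : ∃ d, D.card = d + 1 := ⟨D.card - 1, by omega⟩
      rw [hd, Nat.mul_succ, Nat.add_sub_cancel]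
      set a := (r - 2) * d with ha
      omega
  calc iNum G ≤ I.card := h1
    _ ≤ (r - 2) * D.card - (r - 3) := hIcard
    _ ≤ (r - 2) * (D.card - 1) + 1 := h2
    _ = (r - 2) * (gammaNum G - 1) + 1 := by rw [hDcard]
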